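/- Let n, m be positive integers, let C ∈ ℝ^{n×m}, let a ∈ ℝ^n and b ∈ ℝ^m be vectors with every entry strictly positive, and let ε > 0, τ_s > 0, τ_t > 0. Define the unbalanced optimal transport objective 𝒯(T) = ⟨C, T⟩ + ε·KL(T ‖ a bᵀ) + τ_s·KL(T·𝟙 ‖ a) + τ_t·KL(Tᵀ·𝟙 ‖ b) on the set 𝒟 of entrywise nonnegative n×m matrices. Then 𝒯 attains its minimum on 𝒟: there exists T⋆ ∈ 𝒟 with 𝒯(T⋆) ≤ 𝒯(T) for all T ∈ 𝒟. -/

import Mathlib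

open scoped BigOperators


/-- entrywise generalized KL term. -/
noncomputable def klfun (v : ℝ) (t : ℝ) : ℝ := t * Real.log (t / v) - t + v

lemma mul_log_div' (t v : ℝ) (hv : v ≠ 0) :
    t * Real.log (t / v) = t * Real.log t - t * Real.log v := by
  rcases eq_or_ne t 0 with h | h
  · simp [h]
  · rw [Real.log_div h hv]; ring

lemma klfun_continuous (v : ℝ) (hv : v ≠ 0) : Continuous (klfun v) := by
  have : klfun v = fun t => (t * Real.log t - t * Real.log v) - t + v := by
    funext t; rw [klfun, mul_log_div' t v hv]
  rw [this]
  exact ((Real.continuous_mul_log.sub (continuous_id.mul continuous_const)).sub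
    continuous_id).add continuous_const

lemma klfun_nonneg (v t : ℝ) (hv : 0 < v) (ht : 0 ≤ t) : 0 ≤ klfun v t := by
  rcases eq_or_lt_of_le ht with h | h
  · simp [klfun, ← h, hv.le]
  · have hlog : Real.log (v / t) ≤ v / t - 1 :=
      Real.log_le_sub_one_of_pos (div_pos hv h)
    have hld : Real.log (v / t) = - Real.log (t / v) := by
      rw [Real.log_div hv.ne' h.ne', Real.log_div h.ne' hv.ne']; ring
    rw [hld] at hlog
    have h1 : t - v ≤ t * Real.log (t / v) := by
      have := mul_le_mul_of_nonneg_left hlog ht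
      have hvt : t * (v / t) = v := by field_simp
      nlinarith [this]
    unfold klfun; linarith

/-- coercivity lower bound for a single entry:
  `c*t + ε*klfun v t ≥ t - ε * exp((1 - K)/ε - 1)` with `K = c - ε log v - ε`. -/
lemma entry_lb (c v ε t : ℝ) (hv : 0 < v) (hε : 0 < ε) (ht : 0 ≤ t) :
    t - ε * Real.exp ((1 - (c - ε * Real.log v - ε)) / ε - 1)
      ≤ c * t + ε * klfun v t := by
  set K := c - ε * Real.log v - ε with hK
  set s := Real.exp ((1 - K) / ε - 1) with hs
  have hspos : 0 < s := Real.exp_pos _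
  have key : t - ε * s ≤ ε * (t * Real.log t) + K * t := by
    rcases eq_or_lt_of_le ht with h | h
    · rw [← h]; simp; positivity
    · have hlog : Real.log (s / t) ≤ s / t - 1 :=
        Real.log_le_sub_one_of_pos (div_pos hspos h)
      have hld : Real.log (s / t) = Real.log s - Real.log t :=
        Real.log_div hspos.ne' h.ne'
      have hls : Real.log s = (1 - K) / ε - 1 := by rw [hs, Real.log_exp]
      -- log t ≥ log s + 1 - s/t
      have h1 : Real.log s + 1 - s / t ≤ Real.log t := by
        rw [hld] at hlog; linarith
      have h2 : t * (Real.log s + 1 - s / t) ≤ t * Real.log t :=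
        mul_le_mul_of_nonneg_left h1 ht
      have hst : t * (s / t) = s := by field_simp
      have h3 : t * Real.log s + t - s ≤ t * Real.log t := by nlinarith
      have h4 : ε * (t * Real.log s + t - s) ≤ ε * (t * Real.log t) :=
        mul_le_mul_of_nonneg_left h3 hε.le
      have h5 : ε * (Real.log s + 1) = 1 - K := by
        rw [hls]; field_simp; ring
      nlinarith
  have hexp : c * t + ε * klfun v t
      = ε * (t * Real.log t) + K * t + ε * v := by
    rw [klfun, mul_log_div' t v hv.ne']; ring
  rw [hexp]
  nlinarith


/-- Generalized Kullback–Leibler divergence between vectors, with the convention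
`0 * log 0 = 0` (automatic in Lean since `Real.log 0 = 0`). -/
noncomputable def vecKL {k : ℕ} (u v : Fin k → ℝ) : ℝ :=
  ∑ i, (u i * Real.log (u i / v i) - u i + v i)

/-- Generalized Kullback–Leibler divergence between matrices. -/
noncomputable def matKL {n m : ℕ} (T R : Matrix (Fin n) (Fin m) ℝ) : ℝ :=
  ∑ i, ∑ j, (T i j * Real.log (T i j / R i j) - T i j + R i j)

/-- The unbalanced optimal transport objective
`𝒯(T) = ⟨C, T⟩ + ε·KL(T ‖ a bᵀ) + τ_s·KL(T·𝟙 ‖ a) + τ_t·KL(Tᵀ·𝟙 ‖ b)`. -/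
noncomputable def uotObj {n m : ℕ} (C : Matrix (Fin n) (Fin m) ℝ)
    (a : Fin n → ℝ) (b : Fin m → ℝ) (ε τs τt : ℝ)
    (T : Matrix (Fin n) (Fin m) ℝ) : ℝ :=
  (∑ i, ∑ j, C i j * T i j)
    + ε * matKL T (Matrix.of fun i j => a i * b j)
    + τs * vecKL (fun i => ∑ j, T i j) a
    + τt * vecKL (fun j => ∑ i, T i j) b


lemma uotObj_eq {n m : ℕ} (C : Matrix (Fin n) (Fin m) ℝ)
    (a : Fin n → ℝ) (b : Fin m → ℝ) (ε τs τt : ℝ)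
    (T : Matrix (Fin n) (Fin m) ℝ) :
    uotObj C a b ε τs τt T =
      (∑ i, ∑ j, C i j * T i j)
        + ε * ∑ i, ∑ j, klfun (a i * b j) (T i j)
        + τs * ∑ i, klfun (a i) (∑ j, T i j)
        + τt * ∑ j, klfun (b j) (∑ i, T i j) := by
  simp [uotObj, matKL, vecKL, klfun]

lemma uotObj_continuous {n m : ℕ} (C : Matrix (Fin n) (Fin m) ℝ)
    (a : Fin n → ℝ) (ha : ∀ i, 0 < a i)
    (b : Fin m → ℝ) (hb : ∀ j, 0 < b j) (ε τs τt : ℝ) :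
    Continuous (uotObj C a b ε τs τt) := by
  have heq : uotObj C a b ε τs τt = fun T =>
      (∑ i, ∑ j, C i j * T i j)
        + ε * ∑ i, ∑ j, klfun (a i * b j) (T i j)
        + τs * ∑ i, klfun (a i) (∑ j, T i j)
        + τt * ∑ j, klfun (b j) (∑ i, T i j) := by
    funext T; exact uotObj_eq C a b ε τs τt T
  rw [heq]
  have happ : ∀ (i : Fin n) (j : Fin m),
      Continuous (fun T : Matrix (Fin n) (Fin m) ℝ => T i j) :=
    fun i j => (continuous_apply j).comp (continuous_apply i)
  refine (((Continuous.add ?_ ?_).add ?_).add ?_)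
  · exact continuous_finset_sum _ fun i _ => continuous_finset_sum _ fun j _ =>
      continuous_const.mul (happ i j)
  · exact continuous_const.mul <| continuous_finset_sum _ fun i _ =>
      continuous_finset_sum _ fun j _ =>
        (klfun_continuous _ (mul_pos (ha i) (hb j)).ne').comp (happ i j)
  · exact continuous_const.mul <| continuous_finset_sum _ fun i _ =>
      (klfun_continuous _ (ha i).ne').comp
        (continuous_finset_sum _ fun j _ => happ i j)
  · exact continuous_const.mul <| continuous_finset_sum _ fun j _ =>
      (klfun_continuous _ (hb j).ne').comp
        (continuous_finset_sum _ fun i _ => happ i j)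


/-- The unbalanced optimal transport objective attains its minimum on the set `𝒟`
of entrywise nonnegative matrices: there exists `T⋆ ∈ 𝒟` with `𝒯(T⋆) ≤ 𝒯(T)` for
all `T ∈ 𝒟`. -/
theorem uotObj_exists_min (n m : ℕ) (hn : 0 < n) (hm : 0 < m)
    (C : Matrix (Fin n) (Fin m) ℝ)
    (a : Fin n → ℝ) (ha : ∀ i, 0 < a i)
    (b : Fin m → ℝ) (hb : ∀ j, 0 < b j)
    (ε τs τt : ℝ) (hε : 0 < ε) (hτs : 0 < τs) (hτt : 0 < τt) :
    ∃ Tstar : Matrix (Fin n) (Fin m) ℝ, (∀ i j, 0 ≤ Tstar i j) ∧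
      ∀ T : Matrix (Fin n) (Fin m) ℝ, (∀ i j, 0 ≤ T i j) →
        uotObj C a b ε τs τt Tstar ≤ uotObj C a b ε τs τt T := by
  classical
  set 𝒯 := uotObj C a b ε τs τt with h𝒯
  set Ment : Fin n → Fin m → ℝ := fun i j =>
    ε * Real.exp ((1 - (C i j - ε * Real.log (a i * b j) - ε)) / ε - 1) with hMent
  set M : ℝ := ∑ i, ∑ j, Ment i j with hM
  -- coercivity
  have coercive : ∀ T : Matrix (Fin n) (Fin m) ℝ, (∀ i j, 0 ≤ T i j) →
      (∑ i, ∑ j, T i j) - M ≤ 𝒯 T := by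
    intro T hT
    rw [h𝒯, uotObj_eq]
    have hτ1 : 0 ≤ τs * ∑ i, klfun (a i) (∑ j, T i j) :=
      mul_nonneg hτs.le <| Finset.sum_nonneg fun i _ =>
        klfun_nonneg _ _ (ha i) (Finset.sum_nonneg fun j _ => hT i j)
    have hτ2 : 0 ≤ τt * ∑ j, klfun (b j) (∑ i, T i j) :=
      mul_nonneg hτt.le <| Finset.sum_nonneg fun j _ =>
        klfun_nonneg _ _ (hb j) (Finset.sum_nonneg fun i _ => hT i j)
    have hmain : (∑ i, ∑ j, (T i j - Ment i j))
        ≤ ∑ i, ∑ j, (C i j * T i j + ε * klfun (a i * b j) (T i j)) := by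
      refine Finset.sum_le_sum fun i _ => Finset.sum_le_sum fun j _ => ?_
      exact entry_lb (C i j) (a i * b j) ε (T i j)
        (mul_pos (ha i) (hb j)) hε (hT i j)
    have hsplit : ∑ i, ∑ j, (C i j * T i j + ε * klfun (a i * b j) (T i j))
        = (∑ i, ∑ j, C i j * T i j) + ε * ∑ i, ∑ j, klfun (a i * b j) (T i j) := by
      rw [Finset.mul_sum, ← Finset.sum_add_distrib]
      refine Finset.sum_congr rfl fun i _ => ?_
      rw [Finset.mul_sum, ← Finset.sum_add_distrib]
    have hsub : ∑ i, ∑ j, (T i j - Ment i j)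
        = (∑ i, ∑ j, T i j) - M := by
      rw [hM, ← Finset.sum_sub_distrib]
      refine Finset.sum_congr rfl fun i _ => ?_
      rw [← Finset.sum_sub_distrib]
    rw [hsplit, hsub] at hmain
    linarith
  -- compact box
  set R : ℝ := max (𝒯 0 + M) 0 with hR
  set S : Set (Matrix (Fin n) (Fin m) ℝ) :=
    Set.univ.pi fun _ : Fin n => Set.univ.pi fun _ : Fin m => Set.Icc (0:ℝ) R with hS
  have hmemS : ∀ T : Matrix (Fin n) (Fin m) ℝ,
      T ∈ S ↔ ∀ i j, T i j ∈ Set.Icc (0:ℝ) R := by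
    intro T
    exact ⟨fun h i j => h i (Set.mem_univ i) j (Set.mem_univ j),
      fun h i _ j _ => h i j⟩
  have hScomp : IsCompact S :=
    isCompact_univ_pi fun _ => isCompact_univ_pi fun _ => isCompact_Icc
  have h0S : (0 : Matrix (Fin n) (Fin m) ℝ) ∈ S := by
    rw [hmemS]
    intro i j
    exact ⟨le_refl _, le_max_right _ _⟩
  obtain ⟨Tstar, hTstarS, hmin⟩ := hScomp.exists_isMinOn ⟨0, h0S⟩
    (uotObj_continuous C a ha b hb ε τs τt).continuousOn
  have hTstar_nonneg : ∀ i j, 0 ≤ Tstar i j := fun i j =>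
    ((hmemS Tstar).1 hTstarS i j).1
  refine ⟨Tstar, hTstar_nonneg, fun T hT => ?_⟩
  by_cases hTS : T ∈ S
  · exact hmin hTS
  · -- some entry exceeds R
    rw [hmemS] at hTS
    push_neg at hTS
    obtain ⟨i, j, hij⟩ := hTS
    have hij' : R < T i j := by
      rcases lt_or_ge R (T i j) with h | h
      · exact h
      · exact absurd ⟨hT i j, h⟩ hij
    have hsum1 : T i j ≤ ∑ j', T i j' :=
      Finset.single_le_sum (fun j' _ => hT i j') (Finset.mem_univ j)
    have hsum2 : (∑ j', T i j') ≤ ∑ i', ∑ j', T i' j' :=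
      Finset.single_le_sum
        (fun i' _ => Finset.sum_nonneg fun j' _ => hT i' j') (Finset.mem_univ i)
    have h0min : 𝒯 Tstar ≤ 𝒯 0 := hmin h0S
    have hc := coercive T hT
    have hRge : 𝒯 0 + M ≤ R := le_max_left _ _
    linarith
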